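/- Let k ≥ 1 be an integer and let x ∈ ℤ^k with x ≥ 0 componentwise satisfy Σ_{i=1}^{k} x_i = k and Σ_{i=1}^{k} 2^{i−1}·x_i = 2^k − 1. Then x_i = 1 for all i ∈ {1,…,k}. -/

import Mathlib

open Finset

lemma sum_two_pow_mul_single (k : ℕ) (i : Fin k) (c : ℤ) :
    ∑ j : Fin k, 2 ^ (j : ℕ) * Pi.single i c j = 2 ^ (i : ℕ) * c := by
  classical
  rw [Finset.sum_eq_single i]
  · simp
  · intro b _ hb
    simp [Pi.single_eq_of_ne hb]
  · simp

lemma geom_fin (k : ℕ) : ∑ i : Fin k, (2 : ℤ) ^ (i : ℕ) = 2 ^ k - 1 := by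
  rw [Fin.sum_univ_eq_sum_range]
  have := geom_sum_mul (2 : ℤ) k
  simpa using this

lemma carry_step (k : ℕ) (y : Fin k → ℤ) (hy : ∀ j, 0 ≤ y j)
    (hval : ∑ j : Fin k, 2 ^ (j : ℕ) * y j = 2 ^ k - 1)
    (i : Fin k) (h2 : 2 ≤ y i) :
    ∃ y' : Fin k → ℤ, (∀ j, 0 ≤ y' j) ∧ (∑ j, y' j = (∑ j, y j) - 1) ∧
      ∑ j : Fin k, 2 ^ (j : ℕ) * y' j = 2 ^ k - 1 := by
  classical
  have hik : (i : ℕ) + 1 < k := by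
    have hle : 2 ^ ((i : ℕ) + 1) ≤ (2 : ℤ) ^ k - 1 := by
      calc (2 : ℤ) ^ ((i : ℕ) + 1) = 2 ^ (i : ℕ) * 2 := by ring
        _ ≤ 2 ^ (i : ℕ) * y i := by
            apply mul_le_mul_of_nonneg_left h2 (by positivity)
        _ ≤ ∑ j : Fin k, 2 ^ (j : ℕ) * y j := by
            apply Finset.single_le_sum (f := fun j : Fin k => 2 ^ (j : ℕ) * y j)
            · intro j _; exact mul_nonneg (by positivity) (hy j)
            · exact Finset.mem_univ i
        _ = 2 ^ k - 1 := hval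
    have hlt : (2 : ℤ) ^ ((i : ℕ) + 1) < 2 ^ k := by linarith
    exact (pow_lt_pow_iff_right₀ (by norm_num : (1:ℤ) < 2)).mp hlt
  set i' : Fin k := ⟨(i : ℕ) + 1, hik⟩ with hi'
  have hne : i' ≠ i := by
    intro h
    have : (i : ℕ) + 1 = (i : ℕ) := congrArg Fin.val h
    omega
  set y' : Fin k → ℤ := y + (Pi.single i (-2) + Pi.single i' 1) with hy'def
  have happ : ∀ j : Fin k, y' j
      = y j + ((Pi.single i (-2) : Fin k → ℤ) j + (Pi.single i' 1 : Fin k → ℤ) j) := by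
    intro j; rfl
  refine ⟨y', ?_, ?_, ?_⟩
  · intro j
    rw [happ j]
    by_cases hji : j = i
    · subst hji
      simp [Pi.single_eq_same, Pi.single_eq_of_ne (Ne.symm hne)]
      linarith
    · by_cases hji' : j = i'
      · subst hji'
        simp [Pi.single_eq_same, Pi.single_eq_of_ne hji]
        linarith [hy i']
      · simp [Pi.single_eq_of_ne hji, Pi.single_eq_of_ne hji']
        exact hy j
  · rw [Finset.sum_congr rfl (fun j _ => happ j), Finset.sum_add_distrib,
      Finset.sum_add_distrib, Finset.sum_pi_single', Finset.sum_pi_single']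
    simp
    ring
  · have expand : ∑ j : Fin k, 2 ^ (j : ℕ) * y' j
        = (∑ j : Fin k, 2 ^ (j : ℕ) * y j)
          + ((∑ j : Fin k, 2 ^ (j : ℕ) * (Pi.single i (-2) : Fin k → ℤ) j)
          + (∑ j : Fin k, 2 ^ (j : ℕ) * (Pi.single i' 1 : Fin k → ℤ) j)) := by
      rw [← Finset.sum_add_distrib, ← Finset.sum_add_distrib]
      apply Finset.sum_congr rfl
      intro j _
      rw [happ j]; ring
    rw [expand, sum_two_pow_mul_single, sum_two_pow_mul_single, hval]
    have : ((i' : ℕ)) = (i : ℕ) + 1 := rfl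
    rw [this]
    ring

lemma aux_lb (k : ℕ) : ∀ n : ℕ, ∀ y : Fin k → ℤ, (∀ j, 0 ≤ y j) →
    (∑ j, y j) = (n : ℤ) → (∑ j : Fin k, 2 ^ (j : ℕ) * y j = 2 ^ k - 1) → k ≤ n := by
  intro n
  induction n using Nat.strong_induction_on with
  | _ n IH =>
    intro y hy hsum hval
    by_cases hb : ∀ j, y j ≤ 1
    · have hones : ∀ j ∈ Finset.univ, 2 ^ ((j : Fin k) : ℕ) * y j = 2 ^ ((j : Fin k) : ℕ) := by
        have hle : ∀ j ∈ Finset.univ, 2 ^ ((j : Fin k) : ℕ) * y j ≤ 2 ^ ((j : Fin k) : ℕ) := by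
          intro j _
          calc 2 ^ ((j : Fin k) : ℕ) * y j ≤ 2 ^ ((j : Fin k) : ℕ) * 1 :=
              mul_le_mul_of_nonneg_left (hb j) (by positivity)
            _ = 2 ^ ((j : Fin k) : ℕ) := mul_one _
        have heq : (∑ j : Fin k, 2 ^ (j : ℕ) * y j) = ∑ j : Fin k, (2 : ℤ) ^ (j : ℕ) := by
          rw [hval, geom_fin]
        exact fun j hj => ((Finset.sum_eq_sum_iff_of_le hle).mp heq j hj)
      have hy1 : ∀ j : Fin k, y j = 1 := by
        intro j
        have := hones j (Finset.mem_univ j)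
        have hpow : (2 : ℤ) ^ ((j : Fin k) : ℕ) ≠ 0 := by positivity
        replace this := mul_left_cancel₀ hpow (this.trans (mul_one _).symm)
        omega
      have : (∑ j, y j) = (k : ℤ) := by
        simp [hy1]
      rw [hsum] at this
      have : n = k := by exact_mod_cast this
      omega
    · push_neg at hb
      obtain ⟨i, hi⟩ := hb
      have h2 : 2 ≤ y i := hi
      obtain ⟨y', hy', hsum', hval'⟩ := carry_step k y hy hval i h2
      have hn2 : 2 ≤ (n : ℤ) := by
        have : y i ≤ ∑ j, y j := Finset.single_le_sum (fun j _ => hy j) (Finset.mem_univ i)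
        rw [hsum] at this
        linarith
      have hn2' : 2 ≤ n := by exact_mod_cast hn2
      have hsum'' : (∑ j, y' j) = ((n - 1 : ℕ) : ℤ) := by
        rw [hsum', hsum]
        push_cast [Nat.cast_sub (by omega : 1 ≤ n)]
        ring
      have := IH (n - 1) (by omega) y' hy' hsum'' hval'
      omega

theorem powers_of_two_unique (k : ℕ) (hk : 1 ≤ k) (x : Fin k → ℤ) (hx : 0 ≤ x)
    (hcard : ∑ i, x i = (k : ℤ))
    (hval : ∑ i : Fin k, 2 ^ (i : ℕ) * x i = 2 ^ k - 1) :
    ∀ i, x i = 1 := by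
  have hx' : ∀ j, 0 ≤ x j := fun j => hx j
  have hb : ∀ j, x j ≤ 1 := by
    intro j
    by_contra h
    push_neg at h
    obtain ⟨x', hx'', hsum', hval'⟩ := carry_step k x hx' hval j (by linarith)
    have hsum'' : (∑ i, x' i) = ((k - 1 : ℕ) : ℤ) := by
      rw [hsum', hcard]
      push_cast [Nat.cast_sub hk]
      ring
    have := aux_lb k (k - 1) x' hx'' hsum'' hval'
    omega
  intro i
  have hle : ∀ j ∈ Finset.univ, x j ≤ (fun _ : Fin k => (1 : ℤ)) j := fun j _ => hb j
  have heq : (∑ j, x j) = ∑ _j : Fin k, (1 : ℤ) := by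
    rw [hcard]; simp
  exact (Finset.sum_eq_sum_iff_of_le hle).mp heq i (Finset.mem_univ i)
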